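/- If < is a discrete (two-sided) order on a group G with least positive element z, then z lies in the center of G. -/

import Mathlib

variable {G : Type*} [Group G]

/-- A right order on a group: a strict total order invariant under right multiplication. -/
def IsRightOrder (r : G → G → Prop) : Prop :=
  IsStrictTotalOrder G r ∧ ∀ f g h : G, r f g → r (f * h) (g * h)

/-- `a` is the least element greater than the identity for the order `r`. -/
def LeastPos (r : G → G → Prop) (a : G) : Prop :=
  r 1 a ∧ ∀ g : G, r 1 g → g = a ∨ r a g

theorem stmt4 (r : G → G → Prop) (hr : IsRightOrder r)
    (hleft : ∀ f g h : G, r f g → r (h * f) (h * g))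
    (z : G) (hz : LeastPos r z) :
    ∀ g : G, z * g = g * z := by
  obtain ⟨hsto, hright⟩ := hr
  have irrefl : ∀ a : G, ¬ r a a := fun a => hsto.toIrrefl.irrefl a
  have trans : ∀ a b c : G, r a b → r b c → r a c := fun a b c =>
    hsto.toIsTrans.trans a b c
  -- conjugation preserves order
  have hconj : ∀ (a b g : G), r a b → r (g * a * g⁻¹) (g * b * g⁻¹) := by
    intro a b g h
    exact hright _ _ _ (hleft _ _ _ h)
  have hpos : ∀ g : G, r 1 (g * z * g⁻¹) := by
    intro g
    have := hconj 1 z g hz.1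
    simpa using this
  intro g
  have h1 : r 1 (g⁻¹ * z * g) := by simpa using hpos g⁻¹
  rcases hz.2 _ h1 with h | h
  · -- g⁻¹ z g = z
    have : z * g = g * (g⁻¹ * z * g) := by group
    rw [h] at this
    exact this
  · -- r z (g⁻¹ z g); conjugate by g to get r (g z g⁻¹) z
    exfalso
    have h2 : r (g * z * g⁻¹) z := by
      have := hconj _ _ g h
      have e : g * (g⁻¹ * z * g) * g⁻¹ = z := by group
      rwa [e] at this
    rcases hz.2 _ (hpos g) with h3 | h3
    · rw [h3] at h2; exact irrefl z h2
    · exact irrefl z (trans _ _ _ h3 h2)
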